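/- Let d > 0, σ_a > 0, σ_y ≥ 0 be real numbers, let n ≥ 1 be an integer, and let β_u, β_v ∈ ℝ with β_u² + β_v² > 0. Define, for λ ≥ 0, δ(λ) = [ ((2λd² + β_u² + β_v²)/(d²n))·σ_a² − σ_y² ] / (λd² + β_u² + β_v²)². Then λ₀ = n σ_y² / σ_a² satisfies δ(λ) ≤ δ(λ₀) for every λ ≥ 0, with equality if and only if λ = λ₀; that is, λ₀ is the unique maximizer of δ over [0, ∞). -/

import Mathlib

theorem stmt8 (d σa σy : ℝ) (hd : 0 < d) (hσa : 0 < σa) (hσy : 0 ≤ σy)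
    (n : ℕ) (hn : 1 ≤ n) (βu βv : ℝ) (hβ : 0 < βu ^ 2 + βv ^ 2) :
    let δ : ℝ → ℝ := fun lam =>
      (((2 * lam * d ^ 2 + βu ^ 2 + βv ^ 2) / (d ^ 2 * n)) * σa ^ 2 - σy ^ 2) /
        (lam * d ^ 2 + βu ^ 2 + βv ^ 2) ^ 2
    let lam0 : ℝ := n * σy ^ 2 / σa ^ 2
    ∀ lam : ℝ, 0 ≤ lam → δ lam ≤ δ lam0 ∧ (δ lam = δ lam0 ↔ lam = lam0) := by
  intro δ lam0 lam hlam
  have hn' : (0:ℝ) < (n:ℝ) := by exact_mod_cast Nat.lt_of_lt_of_le Nat.zero_lt_one hn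
  have hD : (0:ℝ) < d ^ 2 := by positivity
  have ha : (0:ℝ) < σa ^ 2 := by positivity
  have hlam0 : 0 ≤ lam0 := by
    have : (0:ℝ) ≤ (n:ℝ) * σy ^ 2 / σa ^ 2 := by positivity
    simpa [lam0] using this
  have h1 : 0 < lam0 * d ^ 2 + βu ^ 2 + βv ^ 2 := by nlinarith [mul_nonneg hlam0 hD.le]
  have h2 : 0 < lam * d ^ 2 + βu ^ 2 + βv ^ 2 := by nlinarith [mul_nonneg hlam hD.le]
  have hden : 0 < (n:ℝ) * (lam0 * d ^ 2 + βu ^ 2 + βv ^ 2) * (lam * d ^ 2 + βu ^ 2 + βv ^ 2) ^ 2 := by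
    positivity
  have hla : lam0 * σa ^ 2 = (n:ℝ) * σy ^ 2 := by
    show (n:ℝ) * σy ^ 2 / σa ^ 2 * σa ^ 2 = _
    field_simp
  have key : δ lam0 - δ lam =
      σa ^ 2 * d ^ 2 * (lam - lam0) ^ 2 /
        ((n:ℝ) * (lam0 * d ^ 2 + βu ^ 2 + βv ^ 2) * (lam * d ^ 2 + βu ^ 2 + βv ^ 2) ^ 2) := by
    show (((2 * lam0 * d ^ 2 + βu ^ 2 + βv ^ 2) / (d ^ 2 * n)) * σa ^ 2 - σy ^ 2) /
        (lam0 * d ^ 2 + βu ^ 2 + βv ^ 2) ^ 2 -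
      (((2 * lam * d ^ 2 + βu ^ 2 + βv ^ 2) / (d ^ 2 * n)) * σa ^ 2 - σy ^ 2) /
        (lam * d ^ 2 + βu ^ 2 + βv ^ 2) ^ 2 = _
    rw [div_sub_div _ _ (by positivity) (by positivity), div_eq_div_iff (by positivity) hden.ne']
    have hσy2 : σy ^ 2 = lam0 * σa ^ 2 / n := by
      field_simp [hla]
      linarith [hla]
    rw [hσy2]
    field_simp
    ring
  constructor
  · have : 0 ≤ σa ^ 2 * d ^ 2 * (lam - lam0) ^ 2 /
        ((n:ℝ) * (lam0 * d ^ 2 + βu ^ 2 + βv ^ 2) * (lam * d ^ 2 + βu ^ 2 + βv ^ 2) ^ 2) := by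
      positivity
    linarith
  · constructor
    · intro h
      have h0 : σa ^ 2 * d ^ 2 * (lam - lam0) ^ 2 /
          ((n:ℝ) * (lam0 * d ^ 2 + βu ^ 2 + βv ^ 2) * (lam * d ^ 2 + βu ^ 2 + βv ^ 2) ^ 2) = 0 := by
        rw [← key, h, sub_self]
      have hnum : σa ^ 2 * d ^ 2 * (lam - lam0) ^ 2 = 0 := by
        rcases div_eq_zero_iff.mp h0 with h' | h'
        · exact h'
        · exact absurd h' hden.ne'
      have : (lam - lam0) ^ 2 = 0 := by
        have := mul_ne_zero ha.ne' hD.ne'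
        rcases mul_eq_zero.mp hnum with h' | h'
        · exact absurd h' this
        · exact h'
      have := pow_eq_zero_iff (n := 2) (by norm_num) |>.mp this
      linarith [sub_eq_zero.mp this]
    · intro h; rw [h]
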